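/- Suppose b = 1, τ = ε + a and ε² − a² = 2. Then the third complex derivative of the entire function λ ↦ Δ(λ, τ) at λ = 0 equals (ε + a)²(ε − 2a) = 6ε − 2ε³ − 2a(ε² − 2), while Δ(0, τ) and its first two derivatives at 0 all vanish. Consequently, if 6ε − 2ε³ − 2a(ε² − 2) ≠ 0, then λ = 0 is a zero of order exactly three of λ ↦ Δ(λ, τ). -/

import Mathlib

open Complex

/-- The characteristic function Δ(λ, τ) = λ² − ελ + 1 − (aλ + b)·exp(−λτ) of the
linearized van der Pol equation with delayed feedback. -/
noncomputable def charFn (ε a b τ : ℝ) (lam : ℂ) : ℂ :=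
  lam ^ 2 - (ε : ℂ) * lam + 1 - ((a : ℂ) * lam + (b : ℂ)) * Complex.exp (-lam * (τ : ℂ))

/-- `z` is a zero of order exactly `n` of `f`: the derivatives of order `< n` all vanish
at `z`, and the `n`-th derivative does not. -/
def IsZeroOfOrderExactly (f : ℂ → ℂ) (z : ℂ) (n : ℕ) : Prop :=
  (∀ k < n, iteratedDeriv k f z = 0) ∧ iteratedDeriv n f z ≠ 0

lemma hg (c d τ : ℂ) (z : ℂ) :
    HasDerivAt (fun z => (c * z + d) * Complex.exp (-z * τ))
      ((-τ * c * z + (c - τ * d)) * Complex.exp (-z * τ)) z := by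
  have h1 : HasDerivAt (fun z : ℂ => c * z + d) c z := by
    simpa using ((hasDerivAt_id z).const_mul c).add_const d
  have h2 : HasDerivAt (fun z : ℂ => Complex.exp (-z * τ)) (-τ * Complex.exp (-z * τ)) z := by
    have h0 : HasDerivAt (fun z : ℂ => -z * τ) (-τ) z := by
      simpa using ((hasDerivAt_id z).neg.mul_const τ)
    exact ((Complex.hasDerivAt_exp (-z * τ)).comp z h0).congr_deriv (by ring)
  have := h1.mul h2
  exact this.congr_deriv (by ring)

lemma charFn_deriv1 (ε a b τ : ℝ) :
    deriv (charFn ε a b τ) = fun z =>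
      2 * z - (ε : ℂ) - ((-τ * a) * z + ((a : ℂ) - τ * b)) * Complex.exp (-z * (τ : ℂ)) := by
  funext z
  have hp : HasDerivAt (fun z : ℂ => z ^ 2 - (ε : ℂ) * z + 1) (2 * z - ε) z := by
    have := (((hasDerivAt_pow 2 z).sub ((hasDerivAt_id z).const_mul (ε : ℂ))).add_const 1)
    exact this.congr_deriv (by norm_num)
  have := (hp.sub (hg (a : ℂ) (b : ℂ) (τ : ℂ) z))
  have h : HasDerivAt (charFn ε a b τ)
      (2 * z - (ε : ℂ) - ((-τ * a) * z + ((a : ℂ) - τ * b)) * Complex.exp (-z * (τ : ℂ))) z := by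
    exact this
  exact h.deriv

lemma charFn_deriv2 (ε a b τ : ℝ) :
    deriv (deriv (charFn ε a b τ)) = fun z =>
      2 - (((τ : ℂ) ^ 2 * a) * z + (-2 * τ * a + τ ^ 2 * b)) * Complex.exp (-z * (τ : ℂ)) := by
  rw [charFn_deriv1]
  funext z
  have hp : HasDerivAt (fun z : ℂ => 2 * z - (ε : ℂ)) 2 z := by
    simpa using (((hasDerivAt_id z).const_mul (2 : ℂ)).sub_const (ε : ℂ))
  have h := hp.sub (hg (-τ * a) ((a : ℂ) - τ * b) (τ : ℂ) z)
  have h' : HasDerivAt (fun z : ℂ =>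
      2 * z - (ε : ℂ) - ((-τ * a) * z + ((a : ℂ) - τ * b)) * Complex.exp (-z * (τ : ℂ)))
      (2 - (((τ : ℂ) ^ 2 * a) * z + (-2 * τ * a + τ ^ 2 * b)) * Complex.exp (-z * (τ : ℂ))) z := by
    exact h.congr_deriv (by ring)
  exact h'.deriv

lemma charFn_deriv3 (ε a b τ : ℝ) :
    deriv (deriv (deriv (charFn ε a b τ))) = fun z =>
      -(((-(τ : ℂ) ^ 3 * a) * z + (3 * τ ^ 2 * a - τ ^ 3 * b)) * Complex.exp (-z * (τ : ℂ))) := by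
  rw [charFn_deriv2]
  funext z
  have h := (hasDerivAt_const z (2 : ℂ)).sub
    (hg ((τ : ℂ) ^ 2 * a) (-2 * τ * a + τ ^ 2 * b) (τ : ℂ) z)
  have h' : HasDerivAt (fun z : ℂ =>
      2 - (((τ : ℂ) ^ 2 * a) * z + (-2 * τ * a + τ ^ 2 * b)) * Complex.exp (-z * (τ : ℂ)))
      (-(((-(τ : ℂ) ^ 3 * a) * z + (3 * τ ^ 2 * a - τ ^ 3 * b)) * Complex.exp (-z * (τ : ℂ)))) z := by
    exact h.congr_deriv (by ring)
  exact h'.deriv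

/-- For b = 1, τ = ε + a and ε² − a² = 2, the third derivative of Δ(·, τ) at λ = 0
equals (ε + a)²(ε − 2a) = 6ε − 2ε³ − 2a(ε² − 2), the value and first two derivatives
vanish at 0, and if 6ε − 2ε³ − 2a(ε² − 2) ≠ 0 then λ = 0 is a zero of order exactly
three. -/
theorem triple_zero_root (ε a b τ : ℝ) (hb : b = 1) (hτ : τ = ε + a)
    (h2 : ε ^ 2 - a ^ 2 = 2) :
    iteratedDeriv 3 (charFn ε a b τ) 0 = ((ε : ℂ) + a) ^ 2 * ((ε : ℂ) - 2 * a) ∧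
    ((ε : ℂ) + a) ^ 2 * ((ε : ℂ) - 2 * a)
      = 6 * (ε : ℂ) - 2 * (ε : ℂ) ^ 3 - 2 * (a : ℂ) * ((ε : ℂ) ^ 2 - 2) ∧
    charFn ε a b τ 0 = 0 ∧
    deriv (charFn ε a b τ) 0 = 0 ∧
    iteratedDeriv 2 (charFn ε a b τ) 0 = 0 ∧
    (6 * ε - 2 * ε ^ 3 - 2 * a * (ε ^ 2 - 2) ≠ 0 →
      IsZeroOfOrderExactly (charFn ε a b τ) 0 3) := by
  subst hb hτ
  have h2' : (ε : ℂ) ^ 2 - (a : ℂ) ^ 2 = 2 := by exact_mod_cast h2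
  have e0 : charFn ε a 1 (ε + a) 0 = 0 := by
    simp [charFn]
  have e1 : deriv (charFn ε a 1 (ε + a)) 0 = 0 := by
    rw [charFn_deriv1]
    push_cast
    simp
  have e2 : iteratedDeriv 2 (charFn ε a 1 (ε + a)) 0 = 0 := by
    rw [show (2 : ℕ) = 1 + 1 from rfl, iteratedDeriv_succ, iteratedDeriv_one, charFn_deriv2]
    push_cast
    simp
    linear_combination (-1 : ℂ)*h2'
  have e3 : iteratedDeriv 3 (charFn ε a 1 (ε + a)) 0
      = ((ε : ℂ) + a) ^ 2 * ((ε : ℂ) - 2 * a) := by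
    rw [show (3 : ℕ) = 2 + 1 from rfl, iteratedDeriv_succ,
      show (2 : ℕ) = 1 + 1 from rfl, iteratedDeriv_succ, iteratedDeriv_one, charFn_deriv3]
    push_cast
    simp
    ring
  have eq2 : ((ε : ℂ) + a) ^ 2 * ((ε : ℂ) - 2 * a)
      = 6 * (ε : ℂ) - 2 * (ε : ℂ) ^ 3 - 2 * (a : ℂ) * ((ε : ℂ) ^ 2 - 2) := by
    linear_combination (3*(ε : ℂ) + 2 * a) * h2'
  refine ⟨e3, eq2, e0, e1, e2, fun hne => ⟨?_, ?_⟩⟩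
  · intro k hk
    interval_cases k
    · simpa [iteratedDeriv_zero] using e0
    · simpa [iteratedDeriv_one] using e1
    · exact e2
  · rw [e3, eq2]
    intro h
    apply hne
    have : ((6 * ε - 2 * ε ^ 3 - 2 * a * (ε ^ 2 - 2) : ℝ) : ℂ) = 0 := by push_cast; linear_combination h
    exact_mod_cast this
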